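/- Let n = 2r be even, let 1 ≤ q ≤ n/2, let k be even, and let π ∈ P_2(k) be a non-crossing pair partition (cr(π) = 0). Then for every α : {1,…,k} → I_n with ker α ≥ π one has Ψ_α = I, the 2^r × 2^r identity matrix. -/

import Mathlib

open Matrix

/-- The three Pauli matrices. -/
def pauli1 : Matrix (Fin 2) (Fin 2) ℂ := !![0, 1; 1, 0]
def pauli2 : Matrix (Fin 2) (Fin 2) ℂ := !![0, -Complex.I; Complex.I, 0]
def pauli3 : Matrix (Fin 2) (Fin 2) ℂ := !![1, 0; 0, -1]

/-- The Majorana fermion `ψ_j` (0-based index `j : Fin (2*r)`), realized as an `r`-fold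
Kronecker product of Pauli matrices, acting on `(Fin r → Fin 2)`-indexed space of size `2^r`.
For `j < r` it is `σ₃^{⊗ j} ⊗ σ₁ ⊗ 1^{⊗ (r-j-1)}`, for `j = r + j'` it is
`σ₃^{⊗ j'} ⊗ σ₂ ⊗ 1^{⊗ (r-j'-1)}`. -/
def majorana (r : ℕ) (j : Fin (2 * r)) :
    Matrix (Fin r → Fin 2) (Fin r → Fin 2) ℂ := fun x y =>
  ∏ i : Fin r,
    (if (i : ℕ) < (j : ℕ) % r then pauli3
     else if (i : ℕ) = (j : ℕ) % r then (if (j : ℕ) < r then pauli1 else pauli2)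
     else (1 : Matrix (Fin 2) (Fin 2) ℂ)) (x i) (y i)

/-- The index set `I_n`: subsets of `{0,…,n-1}` of size `q`, i.e. strictly increasing
`q`-tuples with entries in `{1,…,n}`. -/
abbrev MajIdx (n q : ℕ) := {s : Finset (Fin n) // s.card = q}

/-- `Ψ_R = i^{⌊q/2⌋} ψ_{i_1} ⋯ ψ_{i_q}` where `R = {i_1 < ⋯ < i_q}`. -/
noncomputable def PsiOp (r q : ℕ) (R : MajIdx (2 * r) q) :
    Matrix (Fin r → Fin 2) (Fin r → Fin 2) ℂ :=
  Complex.I ^ (q / 2) • ((R.1.sort (· ≤ ·)).map (majorana r)).prod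

/-- The normalized trace `tr = 2^{-r} Tr`. -/
noncomputable def ntr {r : ℕ} (A : Matrix (Fin r → Fin 2) (Fin r → Fin 2) ℂ) : ℂ :=
  ((2 : ℂ) ^ r)⁻¹ * A.trace

/-- `Ψ_α = Ψ_{α(1)} ⋯ Ψ_{α(k)}`. -/
noncomputable def PsiProd (r q : ℕ) {k : ℕ} (α : Fin k → MajIdx (2 * r) q) :
    Matrix (Fin r → Fin 2) (Fin r → Fin 2) ℂ :=
  ((List.finRange k).map (fun x => PsiOp r q (α x))).prod

/-- A pair partition of `{1,…,k}`, encoded as a fixed-point-free involution: the blocks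
are the pairs `{x, f x}`. -/
def IsPairing {k : ℕ} (f : Fin k → Fin k) : Prop :=
  Function.Involutive f ∧ ∀ x, f x ≠ x

instance {k : ℕ} : DecidablePred (IsPairing (k := k)) := fun f =>
  decidable_of_iff ((∀ x, f (f x) = x) ∧ ∀ x, f x ≠ x) Iff.rfl

/-- The set of crossings of a pair partition encoded by the involution `f`: each crossing
pair of blocks `{v₁ < v₂}, {w₁ < w₂}` with `v₁ < w₁ < v₂ < w₂` is recorded once, as
`(v₁, w₁)`. -/
def crossPairs {k : ℕ} (f : Fin k → Fin k) : Finset (Fin k × Fin k) :=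
  Finset.univ.filter fun p => p.1 < p.2 ∧ p.2 < f p.1 ∧ f p.1 < f p.2

/-- The number of crossings `cr(π)` of a pair partition. -/
def crN {k : ℕ} (f : Fin k → Fin k) : ℕ := (crossPairs f).card

/-- The partition (as a setoid, i.e. an equivalence relation) generated by the
pairs `{x, f x}`; for a fixed-point-free involution `f` this is the associated
pair partition. -/
def genSetoid {k : ℕ} (f : Fin k → Fin k) : Setoid (Fin k) :=
  sInf {s : Setoid (Fin k) | ∀ x, s (f x) x}


section Aux

lemma pauli1_sq : pauli1 * pauli1 = 1 := by
  ext i j; fin_cases i <;> fin_cases j <;>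
    simp [pauli1, Matrix.mul_apply, Fin.sum_univ_two, Matrix.one_apply]
lemma pauli2_sq : pauli2 * pauli2 = 1 := by
  ext i j; fin_cases i <;> fin_cases j <;>
    simp [pauli2, Matrix.mul_apply, Fin.sum_univ_two, Matrix.one_apply, Complex.I_mul_I]
lemma pauli3_sq : pauli3 * pauli3 = 1 := by
  ext i j; fin_cases i <;> fin_cases j <;>
    simp [pauli3, Matrix.mul_apply, Fin.sum_univ_two, Matrix.one_apply]
lemma pauli13 : pauli1 * pauli3 = -(pauli3 * pauli1) := by
  ext i j; fin_cases i <;> fin_cases j <;>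
    simp [pauli1, pauli3, Matrix.mul_apply, Fin.sum_univ_two]
lemma pauli23 : pauli2 * pauli3 = -(pauli3 * pauli2) := by
  ext i j; fin_cases i <;> fin_cases j <;>
    simp [pauli2, pauli3, Matrix.mul_apply, Fin.sum_univ_two]
lemma pauli12 : pauli1 * pauli2 = -(pauli2 * pauli1) := by
  ext i j; fin_cases i <;> fin_cases j <;>
    simp [pauli1, pauli2, Matrix.mul_apply, Fin.sum_univ_two]

/-- Kronecker-type product of `r` two-by-two matrices. -/
def kron (r : ℕ) (M : Fin r → Matrix (Fin 2) (Fin 2) ℂ) :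
    Matrix (Fin r → Fin 2) (Fin r → Fin 2) ℂ := fun x y => ∏ i, M i (x i) (y i)

lemma kron_mul (r : ℕ) (M N : Fin r → Matrix (Fin 2) (Fin 2) ℂ) :
    kron r M * kron r N = kron r (fun i => M i * N i) := by
  ext x y
  simp only [kron, Matrix.mul_apply, ← Finset.prod_mul_distrib]
  rw [Finset.prod_univ_sum]
  simp [Fintype.piFinset_univ]

lemma kron_one (r : ℕ) : kron r (fun _ => 1) = 1 := by
  ext x y
  by_cases h : x = y
  · subst h; simp [kron, Matrix.one_apply]
  · obtain ⟨i, hi⟩ := Function.ne_iff.mp h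
    rw [kron, Matrix.one_apply_ne h]
    exact Finset.prod_eq_zero (Finset.mem_univ i) (by simp [Matrix.one_apply, hi])

lemma kron_anti (r : ℕ) (a b : Fin r → Matrix (Fin 2) (Fin 2) ℂ) (i0 : Fin r)
    (h0 : a i0 * b i0 = -(b i0 * a i0)) (h : ∀ i, i ≠ i0 → a i * b i = b i * a i) :
    kron r (fun i => a i * b i) = -kron r (fun i => b i * a i) := by
  ext x y
  rw [kron, Matrix.neg_apply, kron,
    ← Finset.mul_prod_erase Finset.univ _ (Finset.mem_univ i0),
    ← Finset.mul_prod_erase Finset.univ (fun i => (b i * a i) (x i) (y i)) (Finset.mem_univ i0),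
    h0]
  rw [Matrix.neg_apply]
  rw [Finset.prod_congr rfl (fun i hi => by rw [h i (Finset.ne_of_mem_erase hi)])]
  ring

/-- The `i`-th Kronecker factor of the Majorana matrix `ψ_j`. -/
def mfac (r : ℕ) (j : Fin (2 * r)) (i : Fin r) : Matrix (Fin 2) (Fin 2) ℂ :=
  if (i : ℕ) < (j : ℕ) % r then pauli3
  else if (i : ℕ) = (j : ℕ) % r then (if (j : ℕ) < r then pauli1 else pauli2)
  else 1

lemma majorana_eq (r : ℕ) (j : Fin (2 * r)) : majorana r j = kron r (mfac r j) := rfl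

lemma majorana_sq (r : ℕ) (j : Fin (2 * r)) : majorana r j * majorana r j = 1 := by
  have h : (fun i => mfac r j i * mfac r j i)
      = fun _ : Fin r => (1 : Matrix (Fin 2) (Fin 2) ℂ) := by
    funext i; unfold mfac; split_ifs <;> simp [pauli1_sq, pauli2_sq, pauli3_sq]
  rw [majorana_eq, kron_mul, h, kron_one]

lemma mfac_of_lt (r : ℕ) (j : Fin (2*r)) (i : Fin r) (h : (i:ℕ) < (j:ℕ) % r) :
    mfac r j i = pauli3 := if_pos h

lemma mfac_of_eq (r : ℕ) (j : Fin (2*r)) (i : Fin r) (h : (i:ℕ) = (j:ℕ) % r) :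
    mfac r j i = if (j:ℕ) < r then pauli1 else pauli2 := by
  unfold mfac; rw [if_neg (by omega), if_pos h]

lemma mfac_of_gt (r : ℕ) (j : Fin (2*r)) (i : Fin r) (h : (j:ℕ) % r < (i:ℕ)) :
    mfac r j i = 1 := by
  unfold mfac; rw [if_neg (by omega), if_neg (by omega)]

lemma majorana_anti (r : ℕ) (j l : Fin (2 * r)) (hjl : j ≠ l) :
    majorana r j * majorana r l = -(majorana r l * majorana r j) := by
  have hj2 : (j : ℕ) < 2 * r := j.2
  have hl2 : (l : ℕ) < 2 * r := l.2
  have hr : 0 < r := by omega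
  have hjmr : (j:ℕ) % r < r := Nat.mod_lt _ hr
  have hlmr : (l:ℕ) % r < r := Nat.mod_lt _ hr
  have hvne : (j : ℕ) ≠ (l : ℕ) := fun h => hjl (Fin.ext h)
  set jm := (j : ℕ) % r with hjm
  set lm := (l : ℕ) % r with hlm
  rw [majorana_eq r j, majorana_eq r l, kron_mul, kron_mul]
  refine kron_anti r _ _ ⟨min jm lm, by omega⟩ ?_ ?_
  · rcases lt_trichotomy jm lm with hc | hc | hc
    · rw [mfac_of_eq r j _ (by simp; omega), mfac_of_lt r l _ (by simp; omega)]
      split_ifs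
      · exact pauli13
      · exact pauli23
    · -- jm = lm, exactly one of j,l < r
      have ej' : ¬ (j : ℕ) < r → jm = (j : ℕ) - r := fun h => by
        rw [hjm, Nat.mod_eq_sub_mod (by omega)]; exact Nat.mod_eq_of_lt (by omega)
      have el' : ¬ (l : ℕ) < r → lm = (l : ℕ) - r := fun h => by
        rw [hlm, Nat.mod_eq_sub_mod (by omega)]; exact Nat.mod_eq_of_lt (by omega)
      have hone : ¬ ((j : ℕ) < r ↔ (l : ℕ) < r) := by
        intro hiff
        by_cases hcase : (j : ℕ) < r
        · have h2 := hiff.mp hcase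
          have := Nat.mod_eq_of_lt hcase; have := Nat.mod_eq_of_lt h2; omega
        · have h2 : ¬ (l:ℕ) < r := fun h => hcase (hiff.mpr h)
          have := ej' hcase; have := el' h2; omega
      rw [mfac_of_eq r j _ (by simp; omega), mfac_of_eq r l _ (by simp; omega)]
      by_cases hcase : (j : ℕ) < r
      · have h2 : ¬ (l:ℕ) < r := fun h => hone ⟨fun _ => h, fun _ => hcase⟩
        rw [if_pos hcase, if_neg h2]; exact pauli12
      · have h2 : (l:ℕ) < r := by
          by_contra h2; exact hone ⟨fun h => absurd h hcase, fun h => absurd h h2⟩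
        rw [if_neg hcase, if_pos h2, pauli12, neg_neg]
    · rw [mfac_of_lt r j _ (by simp; omega), mfac_of_eq r l _ (by simp; omega)]
      split_ifs
      · rw [pauli13, neg_neg]
      · rw [pauli23, neg_neg]
  · intro i hi
    have hine : (i : ℕ) ≠ min jm lm := fun h => hi (Fin.ext h)
    rcases lt_trichotomy (i:ℕ) (min jm lm) with h | h | h
    · rw [mfac_of_lt r j _ (by omega), mfac_of_lt r l _ (by omega)]
    · exact absurd h hine
    · by_cases hc : jm ≤ lm
      · rw [mfac_of_gt r j _ (by omega)]; simp
      · rw [mfac_of_gt r l _ (by omega)]; simp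

lemma central_pow {M : Type*} [Ring M] (n : ℕ) (x y : M) :
    x * ((-1) ^ n * y) = (-1) ^ n * (x * y) := by
  rcases Nat.even_or_odd n with h | h
  · rw [h.neg_one_pow]; simp
  · rw [h.neg_one_pow]; simp

lemma prod_mul_anticomm {M : Type*} [Ring M] (a : M) :
    ∀ (l : List M), (∀ b ∈ l, b * a = -(a * b)) →
      l.prod * a = (-1) ^ l.length * (a * l.prod) := by
  intro l
  induction l with
  | nil => simp
  | cons b t ih =>
    intro h
    have hb := h b List.mem_cons_self
    have ht := ih (fun c hc => h c (List.mem_cons_of_mem _ hc))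
    rw [List.prod_cons, List.length_cons, mul_assoc, ht, central_pow, ← mul_assoc b a, hb,
      pow_succ]
    simp only [neg_mul, mul_neg, mul_assoc, mul_one, one_mul]

lemma prod_sq {M : Type*} [Ring M] :
    ∀ (l : List M), (∀ b ∈ l, b * b = 1) →
      (l.Pairwise fun x y => y * x = -(x * y)) →
      l.prod * l.prod = (-1) ^ (l.length * (l.length - 1) / 2) := by
  intro l
  induction l with
  | nil => simp
  | cons a t ih =>
    intro hsq hpw
    rw [List.pairwise_cons] at hpw
    have ht := ih (fun b hb => hsq b (List.mem_cons_of_mem _ hb)) hpw.2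
    have ha := prod_mul_anticomm a t (fun b hb => hpw.1 b hb)
    have hsa := hsq a List.mem_cons_self
    have key : (a * t.prod) * (a * t.prod) = (-1) ^ t.length * (t.prod * t.prod) := by
      rw [mul_assoc, ← mul_assoc t.prod a, ha, mul_assoc ((-1 : M) ^ t.length), central_pow,
        mul_assoc, ← mul_assoc a a, hsa, one_mul]
    rw [List.prod_cons, key, ht, ← pow_add, List.length_cons]
    congr 1
    simp only [Nat.add_sub_cancel]
    set n := t.length with hn
    have hd : 2 ∣ n * (n - 1) := by
      rcases Nat.even_or_odd n with h | h
      · exact (h.two_dvd).mul_right _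
      · exact ((Nat.Odd.sub_odd h odd_one).two_dvd).mul_left _
    have hk : (n + 1) * n = n * (n - 1) + 2 * n := by
      cases n with
      | zero => rfl
      | succ m => simp [Nat.succ_sub_one]; ring
    omega

lemma even_exponent (q : ℕ) : Even (q / 2 + q * (q - 1) / 2) := by
  rcases Nat.even_or_odd q with ⟨m, hm⟩ | ⟨m, hm⟩
  · have ha : q / 2 = m := by omega
    cases m with
    | zero => simp [hm, ha]
    | succ p =>
      have h1 : q * (q - 1) = 2 * ((p + 1) * (q - 1)) := by rw [hm]; ring
      have h2 : q * (q - 1) / 2 = (p + 1) * (q - 1) := by omega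
      have h3 : q - 1 = 2 * p + 1 := by omega
      refine ⟨(p + 1) * (p + 1), ?_⟩
      rw [ha, h2, h3]; ring
  · have ha : q / 2 = m := by omega
    have h1 : q * (q - 1) = 2 * (q * m) := by rw [hm, Nat.add_sub_cancel]; ring
    have h2 : q * (q - 1) / 2 = q * m := by omega
    refine ⟨m * m + m, ?_⟩
    rw [ha, h2, hm]; ring

lemma PsiOp_sq (r q : ℕ) (R : MajIdx (2 * r) q) : PsiOp r q R * PsiOp r q R = 1 := by
  set L := (R.1.sort (· ≤ ·)).map (majorana r) with hL
  have hlen : L.length = q := by rw [hL, List.length_map, Finset.length_sort, R.2]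
  have hsq : ∀ b ∈ L, b * b = 1 := by
    intro b hb
    obtain ⟨j, _, rfl⟩ := List.mem_map.mp hb
    exact majorana_sq r j
  have hpw : L.Pairwise fun x y => y * x = -(x * y) := by
    refine List.Pairwise.map _ ?_ ((R.1.sort_nodup (· ≤ ·)))
    intro a b hab
    exact majorana_anti r b a (fun h => hab h.symm)
  have hps := prod_sq L hsq hpw
  rw [PsiOp, ← hL, smul_mul_assoc, mul_smul_comm, smul_smul, hps, hlen]
  have hneg : ((-1 : Matrix (Fin r → Fin 2) (Fin r → Fin 2) ℂ)) ^ (q * (q - 1) / 2)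
      = ((-1 : ℂ) ^ (q * (q - 1) / 2)) • (1 : Matrix (Fin r → Fin 2) (Fin r → Fin 2) ℂ) := by
    have h : (-1 : Matrix (Fin r → Fin 2) (Fin r → Fin 2) ℂ) = (-1 : ℂ) • 1 := by simp
    rw [h, smul_pow, one_pow]
  rw [hneg, smul_smul]
  have : Complex.I ^ (q / 2) * Complex.I ^ (q / 2) * (-1 : ℂ) ^ (q * (q - 1) / 2) = 1 := by
    rw [← pow_add, ← two_mul, pow_mul, Complex.I_sq, ← pow_add]
    exact (even_exponent q).neg_one_pow
  rw [this, one_smul]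

lemma prod_range_pairing {M : Type*} [Monoid M] :
    ∀ k (f : ℕ → ℕ) (g : ℕ → M),
    (∀ i, i < k → f i < k ∧ f (f i) = i ∧ f i ≠ i ∧ g (f i) = g i ∧ g i * g i = 1) →
    (∀ i j, i < j → j < f i → f i < f j → f j < k → False) →
    ((List.range k).map g).prod = 1 := by
  intro k
  induction k using Nat.strong_induction_on with
  | _ k IH =>
    intro f g hH hNC
    rcases Nat.eq_zero_or_pos k with rfl | hk
    · simp
    obtain ⟨hmk, hfm, hm0, hgm, hg0⟩ := hH 0 hk
    set m := f 0 with hm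
    have hm1 : 1 ≤ m := Nat.pos_of_ne_zero hm0
    -- the interval (0, m) is invariant under f
    have hmid : ∀ x, 0 < x → x < m → 0 < f x ∧ f x < m := by
      intro x hx0 hxm
      have hxk : x < k := lt_trans hxm hmk
      obtain ⟨hfx, hffx, hfxne, -, -⟩ := hH x hxk
      have h1 : f x ≠ 0 := fun h => by rw [← hffx, h, ← hm] at hxm; omega
      have h2 : f x ≠ m := fun h => by
        have : f m = x := by rw [← h, hffx]
        rw [hfm] at this; omega
      have h3 : ¬ m < f x := fun h => hNC 0 x hx0 hxm h hfx
      omega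
    -- the interval (m, k) is invariant under f
    have hhigh : ∀ x, m < x → x < k → m < f x ∧ f x < k := by
      intro x hmx hxk
      obtain ⟨hfx, hffx, hfxne, -, -⟩ := hH x hxk
      have h1 : f x ≠ 0 := fun h => by
        have : f 0 = x := by rw [← h, hffx]
        omega
      have h2 : f x ≠ m := fun h => by
        have : f m = x := by rw [← h, hffx]
        rw [hfm] at this; omega
      have h3 : ¬ f x < m := by
        intro h
        have h4 : 0 < f x := Nat.pos_of_ne_zero h1
        have := (hmid (f x) h4 h).2
        rw [hffx] at this; omega
      omega
    -- split range k = [0] ++ range' 1 (m-1) ++ [m] ++ range' (m+1) (k-m-1)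
    have hsplit : List.range k =
        [0] ++ (List.range (m - 1)).map (fun i => 1 + i) ++ [m]
          ++ (List.range (k - m - 1)).map (fun i => (m + 1) + i) := by
      have e0 : List.range' 0 1 ++ List.range' 1 (m-1) = List.range' 0 ((m-1) + 1) := by
        simpa [Nat.add_comm] using @List.range'_append 0 1 (m-1) 1
      have e1 : List.range' 0 ((m-1)+1) ++ List.range' m 1
          = List.range' 0 (1 + ((m-1)+1)) := by
        simpa [show (m-1)+1 = m by omega, Nat.add_comm] using @List.range'_append 0 ((m-1)+1) 1 1
      have e2 : List.range' 0 (1 + ((m-1)+1)) ++ List.range' (m+1) (k-m-1)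
          = List.range' 0 ((k-m-1) + (1 + ((m-1)+1))) := by
        rw [Nat.add_comm (k-m-1)]
        simpa [show 1 + ((m-1)+1) = m + 1 by omega] using
          @List.range'_append 0 (1 + ((m-1)+1)) (k-m-1) 1
      have efin : (k-m-1) + (1 + ((m-1)+1)) = k := by omega
      conv_lhs => rw [List.range_eq_range', ← efin, ← e2, ← e1, ← e0]
      simp [List.range'_eq_map_range, List.range_succ]
    -- inner part
    have P1 : ((List.range (m - 1)).map (fun i => g (1 + i))).prod = 1 := by
      refine IH (m - 1) (by omega) (fun i => f (1 + i) - 1) (fun i => g (1 + i)) ?_ ?_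
      · intro i hi
        beta_reduce
        have h1 : 0 < 1 + i := by omega
        have h2 : 1 + i < m := by omega
        obtain ⟨ha, hb⟩ := hmid (1 + i) h1 h2
        obtain ⟨-, hffx, hfxne, hg1, hg2⟩ := hH (1 + i) (by omega)
        refine ⟨by omega, ?_, by omega, ?_, hg2⟩
        · rw [show 1 + (f (1 + i) - 1) = f (1 + i) by omega, hffx]; omega
        · rw [show 1 + (f (1 + i) - 1) = f (1 + i) by omega, hg1]
      · intro i j hij hj hfi hfj
        beta_reduce at hj hfi hfj
        have hjm : j < m - 1 := by omega
        obtain ⟨ha, hb⟩ := hmid (1 + i) (by omega) (by omega)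
        obtain ⟨hc, hd⟩ := hmid (1 + j) (by omega) (by omega)
        exact hNC (1 + i) (1 + j) (by omega) (by omega) (by omega) (by omega)
    -- outer part
    have P2 : ((List.range (k - m - 1)).map (fun i => g ((m + 1) + i))).prod = 1 := by
      refine IH (k - m - 1) (by omega) (fun i => f ((m + 1) + i) - (m + 1))
        (fun i => g ((m + 1) + i)) ?_ ?_
      · intro i hi
        beta_reduce
        have h2 : (m + 1) + i < k := by omega
        obtain ⟨ha, hb⟩ := hhigh ((m + 1) + i) (by omega) h2
        obtain ⟨-, hffx, hfxne, hg1, hg2⟩ := hH ((m + 1) + i) h2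
        refine ⟨by omega, ?_, by omega, ?_, hg2⟩
        · rw [show (m+1) + (f ((m+1) + i) - (m+1)) = f ((m+1) + i) by omega, hffx]; omega
        · rw [show (m+1) + (f ((m+1) + i) - (m+1)) = f ((m+1) + i) by omega, hg1]
      · intro i j hij hj hfi hfj
        beta_reduce at hj hfi hfj
        have hjlt : (m + 1) + j < k := by
          obtain ⟨ha, hb⟩ := hhigh ((m+1)+i) (by omega) (by omega)
          omega
        obtain ⟨ha, hb⟩ := hhigh ((m + 1) + i) (by omega) (by omega)
        obtain ⟨hc, hd⟩ := hhigh ((m + 1) + j) (by omega) hjlt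
        exact hNC ((m+1) + i) ((m+1) + j) (by omega) (by omega) (by omega) (by omega)
    rw [hsplit]
    simp only [List.map_append, List.prod_append, List.map_map, List.map_cons, List.map_nil,
      List.prod_cons, List.prod_nil, Function.comp_def]
    rw [P1, P2]
    rw [hgm] at *
    simp [← hm, hgm, hg0]

end Aux

/-- if `π ∈ P₂(k)` (encoded by the fixed-point-free involution `f`) is
non-crossing and `ker α ≥ π`, then `Ψ_α = I`. -/
theorem PsiProd_noncrossing (r q : ℕ) (hq1 : 1 ≤ q) (hq2 : q ≤ r) {k : ℕ} (hk : Even k)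
    (f : Fin k → Fin k) (hf : IsPairing f) (hcr : crN f = 0)
    (α : Fin k → MajIdx (2 * r) q) (hα : ∀ x, α (f x) = α x) :
    PsiProd r q α = 1 := by
  classical
  have hcp : crossPairs f = ∅ := Finset.card_eq_zero.mp hcr
  have hcr' : ∀ (i j : Fin k), i < j → j < f i → f i < f j → False := by
    intro i j h1 h2 h3
    have hm : (i, j) ∈ crossPairs f := Finset.mem_filter.mpr ⟨Finset.mem_univ _, h1, h2, h3⟩
    rw [hcp] at hm
    exact absurd hm (Finset.notMem_empty _)
  set g : ℕ → Matrix (Fin r → Fin 2) (Fin r → Fin 2) ℂ :=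
    fun i => if h : i < k then PsiOp r q (α ⟨i, h⟩) else 1 with hg
  set F : ℕ → ℕ := fun i => if h : i < k then ((f ⟨i, h⟩ : Fin k) : ℕ) else i with hF
  have main : ((List.range k).map g).prod = 1 := by
    refine prod_range_pairing k F g ?_ ?_
    · intro i hi
      simp only [hF, hg, dif_pos hi]
      set x : Fin k := ⟨i, hi⟩ with hx
      have hfx : ((f x : Fin k) : ℕ) < k := (f x).2
      refine ⟨hfx, ?_, ?_, ?_, PsiOp_sq r q _⟩
      · rw [dif_pos hfx]
        simp only [Fin.eta]
        rw [hf.1 x]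
      · intro h
        exact hf.2 x (Fin.ext h)
      · rw [dif_pos hfx]
        simp only [Fin.eta]
        rw [hα x]
    · intro i j h1 h2 h3 h4
      simp only [hF] at h2 h3 h4
      have hj : j < k := by
        by_contra hj
        rw [dif_neg hj] at h4
        exact hj h4
      have hi : i < k := lt_trans h1 hj
      rw [dif_pos hi] at h2 h3
      rw [dif_pos hj] at h3
      exact hcr' ⟨i, hi⟩ ⟨j, hj⟩ (Fin.mk_lt_mk.mpr h1) h2 h3
  rw [← main, PsiProd]
  have hrange : List.range k = (List.finRange k).map Fin.val := by simp
  rw [hrange, List.map_map]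
  congr 1
  refine List.map_congr_left ?_
  intro x _
  simp only [Function.comp_apply, hg, dif_pos x.2, Fin.eta]
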